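/- Consider the unconstrained problem X = {0,1}ⁿ with nominal costs ĉ ∈ ℝⁿ and nominal solution x̂ defined by x̂ᵢ = 1 iff ĉᵢ ≤ 0. Consider all deviation pairs (d⁺,d⁻) with d⁺, d⁻ ≥ 0 satisfying dᵢ⁻ = 0 whenever x̂ᵢ = 1 and dᵢ⁺ = 0 whenever x̂ᵢ = 0 (costs may only increase on coefficients chosen by x̂ and only decrease on the others, with no further bounds). Then the greatest element of the set of sizes { Σᵢ (dᵢ⁺ + dᵢ⁻) : x̂ minimizes the regret over {0,1}ⁿ with respect to U(d⁺,d⁻) } equals Σᵢ 2|ĉᵢ|, attained by dᵢ⁺ = −2ĉᵢ when ĉᵢ ≤ 0 and dᵢ⁻ = 2ĉᵢ when ĉᵢ > 0. -/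
import Mathlib


/-- The binary cube `{0,1}ⁿ`, feasible set of the unconstrained combinatorial problem. -/
def binaryCube (n : ℕ) : Set (Fin n → ℝ) := {y | ∀ i, y i = 0 ∨ y i = 1}

/-- The min-max regret of `x` for the unconstrained combinatorial problem with general
interval uncertainty set `U(d⁺,d⁻) = {c : ĉᵢ − dᵢ⁻ ≤ cᵢ ≤ ĉᵢ + dᵢ⁺}`:
`reg(x) = max_{c∈U(d⁺,d⁻)} ( cᵀx − min_{y∈{0,1}ⁿ} cᵀy )`. -/
noncomputable def ucRegret {n : ℕ} (chat dp dm : Fin n → ℝ) (x : Fin n → ℝ) : ℝ :=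
  sSup ((fun c : Fin n → ℝ =>
      (∑ i, c i * x i) - sInf ((fun y => ∑ i, c i * y i) '' binaryCube n)) ''
    {c : Fin n → ℝ | ∀ i, chat i - dm i ≤ c i ∧ c i ≤ chat i + dp i})

lemma aux_sub_min (a : ℝ) : a - min a 0 = max a 0 := by
  rcases le_total a 0 with h | h <;> simp [min_eq_left, min_eq_right, max_eq_left, max_eq_right, h]

lemma sInf_cube {n : ℕ} (c : Fin n → ℝ) :
    sInf ((fun y => ∑ i, c i * y i) '' binaryCube n) = ∑ i, min (c i) 0 := by
  have hlow : ∀ z ∈ (fun y => ∑ i, c i * y i) '' binaryCube n, (∑ i, min (c i) 0) ≤ z := by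
    rintro z ⟨y, hy, rfl⟩
    apply Finset.sum_le_sum
    intro i _
    rcases hy i with h | h <;> simp [h, min_le_left, min_le_right]
  have hy : (fun i => if c i ≤ 0 then (1 : ℝ) else 0) ∈ binaryCube n := by
    intro i; by_cases h : c i ≤ 0 <;> simp [h]
  have hmem : (∑ i, min (c i) 0) ∈ (fun y => ∑ i, c i * y i) '' binaryCube n := by
    refine ⟨_, hy, ?_⟩
    apply Finset.sum_congr rfl
    intro i _
    by_cases h : c i ≤ 0
    · simp [h, min_eq_left h]
    · simp [h, min_eq_right (le_of_not_ge h)]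
  exact le_antisymm (csInf_le ⟨_, hlow⟩ hmem) (le_csInf ⟨_, hmem⟩ hlow)

lemma regret_eq {n : ℕ} (chat dp dm x : Fin n → ℝ)
    (hdp : ∀ i, 0 ≤ dp i) (hdm : ∀ i, 0 ≤ dm i) (hx : x ∈ binaryCube n) :
    ucRegret chat dp dm x =
      ∑ i, (if x i = 1 then max (chat i + dp i) 0 else max (dm i - chat i) 0) := by
  unfold ucRegret
  have hF : ∀ c : Fin n → ℝ,
      ((∑ i, c i * x i) - sInf ((fun y => ∑ i, c i * y i) '' binaryCube n))
        = ∑ i, (c i * x i - min (c i) 0) := by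
    intro c; rw [sInf_cube, Finset.sum_sub_distrib]
  -- upper bound on each element
  have hub : ∀ z ∈ (fun c : Fin n → ℝ =>
      (∑ i, c i * x i) - sInf ((fun y => ∑ i, c i * y i) '' binaryCube n)) ''
      {c : Fin n → ℝ | ∀ i, chat i - dm i ≤ c i ∧ c i ≤ chat i + dp i},
      z ≤ ∑ i, (if x i = 1 then max (chat i + dp i) 0 else max (dm i - chat i) 0) := by
    rintro z ⟨c, hc, rfl⟩
    dsimp only
    rw [hF]
    apply Finset.sum_le_sum
    intro i _
    obtain ⟨h1, h2⟩ := hc i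
    rcases hx i with h0 | h1'
    · have hne : x i ≠ 1 := by rw [h0]; norm_num
      rw [if_neg hne, h0, mul_zero, zero_sub]
      rcases le_total (c i) 0 with hc0 | hc0
      · rw [min_eq_left hc0]
        exact le_sup_of_le_left (by linarith)
      · rw [min_eq_right hc0, neg_zero]; exact le_max_right _ _
    · simp only [h1', if_true, mul_one]
      rw [aux_sub_min]
      exact max_le_max h2 le_rfl
  -- witness attaining the bound
  set cstar : Fin n → ℝ := fun i => if x i = 1 then chat i + dp i else chat i - dm i with hcstar
  have hcmem : cstar ∈ {c : Fin n → ℝ | ∀ i, chat i - dm i ≤ c i ∧ c i ≤ chat i + dp i} := by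
    intro i
    by_cases h : x i = 1 <;> simp only [hcstar, h, if_true, if_false] <;>
      constructor <;> [skip; skip; skip; skip] <;> nlinarith [hdp i, hdm i]
  have hval : (∑ i, (cstar i * x i - min (cstar i) 0))
      = ∑ i, (if x i = 1 then max (chat i + dp i) 0 else max (dm i - chat i) 0) := by
    apply Finset.sum_congr rfl
    intro i _
    by_cases h : x i = 1
    · simp only [hcstar]; rw [if_pos h, if_pos h, h, mul_one]; exact aux_sub_min _
    · have h0 : x i = 0 := (hx i).resolve_right h
      simp only [hcstar, if_neg h]
      rw [h0, mul_zero, zero_sub]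
      rcases le_total (chat i - dm i) 0 with hc0 | hc0
      · rw [min_eq_left hc0, max_eq_left (by linarith)]; ring
      · rw [min_eq_right hc0, max_eq_right (by linarith), neg_zero]
  have hmem : (∑ i, (if x i = 1 then max (chat i + dp i) 0 else max (dm i - chat i) 0))
      ∈ (fun c : Fin n → ℝ =>
      (∑ i, c i * x i) - sInf ((fun y => ∑ i, c i * y i) '' binaryCube n)) ''
      {c : Fin n → ℝ | ∀ i, chat i - dm i ≤ c i ∧ c i ≤ chat i + dp i} := by
    exact ⟨cstar, hcmem, by dsimp only; rw [hF]; exact hval⟩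
  exact le_antisymm (csSup_le ⟨_, hmem⟩ hub) (le_csSup ⟨_, hub⟩ hmem)

/-- Corollary: for the unconstrained problem with nominal solution `x̂`
(`x̂ᵢ = 1` iff `ĉᵢ ≤ 0`), among deviation pairs `(d⁺,d⁻) ≥ 0` with `dᵢ⁻ = 0` whenever
`x̂ᵢ = 1` and `dᵢ⁺ = 0` whenever `x̂ᵢ = 0`, the greatest achievable uncertainty size
`Σᵢ (dᵢ⁺ + dᵢ⁻)` keeping `x̂` regret-optimal equals `Σᵢ 2|ĉᵢ|`, attained by
`dᵢ⁺ = −2ĉᵢ` when `ĉᵢ ≤ 0` and `dᵢ⁻ = 2ĉᵢ` when `ĉᵢ > 0`. -/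
theorem largest_one_sided_uncertainty_size
    {n : ℕ} (chat : Fin n → ℝ) :
    IsGreatest
      {s : ℝ | ∃ dp dm : Fin n → ℝ,
        (∀ i, 0 ≤ dp i) ∧ (∀ i, 0 ≤ dm i) ∧
        (∀ i, chat i ≤ 0 → dm i = 0) ∧ (∀ i, ¬ chat i ≤ 0 → dp i = 0) ∧
        (∀ x ∈ binaryCube n,
          ucRegret chat dp dm (fun i => if chat i ≤ 0 then (1 : ℝ) else 0) ≤
            ucRegret chat dp dm x) ∧
        s = ∑ i, (dp i + dm i)}
      (∑ i, 2 * |chat i|) ∧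
    ((∀ x ∈ binaryCube n,
        ucRegret chat
          (fun i => if chat i ≤ 0 then -2 * chat i else 0)
          (fun i => if chat i ≤ 0 then 0 else 2 * chat i)
          (fun i => if chat i ≤ 0 then (1 : ℝ) else 0) ≤
        ucRegret chat
          (fun i => if chat i ≤ 0 then -2 * chat i else 0)
          (fun i => if chat i ≤ 0 then 0 else 2 * chat i) x) ∧
      (∑ i, ((if chat i ≤ 0 then -2 * chat i else 0) +
        (if chat i ≤ 0 then 0 else 2 * chat i))) = ∑ i, 2 * |chat i|) := by
  classical
  set xhat : Fin n → ℝ := fun i => if chat i ≤ 0 then (1 : ℝ) else 0 with hxhat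
  have hxcube : xhat ∈ binaryCube n := by
    intro i; by_cases h : chat i ≤ 0 <;> simp [hxhat, h]
  have hxif : ∀ i, xhat i = 1 ↔ chat i ≤ 0 := by
    intro i; by_cases h : chat i ≤ 0 <;> simp [hxhat, h]
  set dp0 : Fin n → ℝ := fun i => if chat i ≤ 0 then -2 * chat i else 0 with hdp0def
  set dm0 : Fin n → ℝ := fun i => if chat i ≤ 0 then 0 else 2 * chat i with hdm0def
  have hdp0 : ∀ i, 0 ≤ dp0 i := by
    intro i; by_cases h : chat i ≤ 0
    · simp only [hdp0def, if_pos h]; linarith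
    · simp [hdp0def, h]
  have hdm0 : ∀ i, 0 ≤ dm0 i := by
    intro i; by_cases h : chat i ≤ 0
    · simp [hdm0def, h]
    · simp only [hdm0def, if_neg h]; push_neg at h; linarith
  -- terms for the witness are all |chat i|
  have e1 : ∀ i, max (chat i + dp0 i) 0 = |chat i| := by
    intro i; by_cases h : chat i ≤ 0
    · simp only [hdp0def, hdm0def, h, if_true, ite_true]
      rw [abs_of_nonpos h, max_eq_left (by linarith)]; ring
    · simp only [hdp0def, hdm0def, h, if_false, ite_false]
      rw [add_zero, abs_of_pos (lt_of_not_ge h), max_eq_left (le_of_lt (lt_of_not_ge h))]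
  have e2 : ∀ i, max (dm0 i - chat i) 0 = |chat i| := by
    intro i; by_cases h : chat i ≤ 0
    · simp only [hdp0def, hdm0def, h, if_true, ite_true]
      rw [zero_sub, abs_of_nonpos h, max_eq_left (by linarith)]
    · have h' := lt_of_not_ge h
      simp only [hdp0def, hdm0def, h, if_false, ite_false]
      rw [abs_of_pos h', max_eq_left (by linarith)]; ring
  have hopt0 : ∀ x ∈ binaryCube n, ucRegret chat dp0 dm0 xhat ≤ ucRegret chat dp0 dm0 x := by
    intro x hx
    rw [regret_eq chat dp0 dm0 xhat hdp0 hdm0 hxcube, regret_eq chat dp0 dm0 x hdp0 hdm0 hx]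
    apply Finset.sum_le_sum
    intro i _
    split_ifs <;> simp [e1 i, e2 i]
  have hsum0 : (∑ i, (dp0 i + dm0 i)) = ∑ i, 2 * |chat i| := by
    apply Finset.sum_congr rfl
    intro i _
    by_cases h : chat i ≤ 0
    · simp only [hdp0def, hdm0def, h, if_true, ite_true]
      rw [abs_of_nonpos h]; ring
    · simp only [hdp0def, hdm0def, h, if_false, ite_false]
      rw [abs_of_pos (lt_of_not_ge h)]; ring
  refine ⟨⟨⟨dp0, dm0, hdp0, hdm0, ?_, ?_, hopt0, hsum0.symm⟩, ?_⟩, hopt0, hsum0⟩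
  · intro i h; simp [hdm0def, h]
  · intro i h; simp [hdp0def, h]
  -- upper bound
  rintro s ⟨dp, dm, hdp, hdm, hdmc, hdpc, hopt, rfl⟩
  rw [← hsum0]
  apply Finset.sum_le_sum
  intro i _
  -- consider the flip of xhat at i
  set x : Fin n → ℝ := Function.update xhat i (1 - xhat i) with hxdef
  have hxmem : x ∈ binaryCube n := by
    intro j
    by_cases hj : j = i
    · subst hj
      rw [hxdef, Function.update_self]
      rcases hxcube j with h | h <;> [right; left] <;> rw [h] <;> ring
    · rw [hxdef, Function.update_of_ne hj]; exact hxcube j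
  have key := hopt x hxmem
  rw [regret_eq chat dp dm xhat hdp hdm hxcube, regret_eq chat dp dm x hdp hdm hxmem,
    ← Finset.sum_erase_add _ _ (Finset.mem_univ i),
    ← Finset.sum_erase_add _ _ (Finset.mem_univ i)] at key
  have hsame : (∑ j ∈ Finset.univ.erase i,
        (if xhat j = 1 then max (chat j + dp j) 0 else max (dm j - chat j) 0))
      = ∑ j ∈ Finset.univ.erase i,
        (if x j = 1 then max (chat j + dp j) 0 else max (dm j - chat j) 0) := by
    apply Finset.sum_congr rfl
    intro j hj
    rw [hxdef, Function.update_of_ne (Finset.ne_of_mem_erase hj)]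
  rw [hsame] at key
  have hterm : (if xhat i = 1 then max (chat i + dp i) 0 else max (dm i - chat i) 0)
      ≤ (if x i = 1 then max (chat i + dp i) 0 else max (dm i - chat i) 0) := by
    linarith
  by_cases h : chat i ≤ 0
  · have hx1 : xhat i = 1 := (hxif i).mpr h
    have hxi : x i = 0 := by rw [hxdef, Function.update_self, hx1]; ring
    have hxne : x i ≠ 1 := by rw [hxi]; norm_num
    rw [if_pos hx1, if_neg hxne, hdmc i h, zero_sub] at hterm
    have h1 : chat i + dp i ≤ max (chat i + dp i) 0 := le_max_left _ _
    have h2 : max (-chat i) 0 = -chat i := max_eq_left (by linarith)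
    rw [h2] at hterm
    simp only [hdp0def, hdm0def, h, if_true, ite_true]
    rw [hdmc i h]
    linarith
  · have hx0 : xhat i = 0 := by rw [hxhat]; simp [h]
    have hxne : xhat i ≠ 1 := by rw [hx0]; norm_num
    have hxi : x i = 1 := by rw [hxdef, Function.update_self, hx0]; ring
    rw [if_neg hxne, if_pos hxi, hdpc i h, add_zero] at hterm
    have h' := lt_of_not_ge h
    have h1 : dm i - chat i ≤ max (dm i - chat i) 0 := le_max_left _ _
    have h2 : max (chat i) 0 = chat i := max_eq_left (le_of_lt h')
    rw [h2] at hterm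
    simp only [hdp0def, hdm0def, h, if_false, ite_false]
    rw [hdpc i h]
    linarith
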